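/- Let t ≥ 1, let σ > 0 and τ > 0 satisfy σ^t ≤ τ, let C ≥ 1 be a real number, and let θ ∈ ℝ satisfy |θ|^t ≥ C^t τ. If X ~ N(θ, σ²), then P(|X|^t ≤ τ) ≤ exp(−(C − 1)²/2). -/

import Mathlib

open MeasureTheory ProbabilityTheory NNReal

lemma gaussianPDFReal_shift_le (m : ℝ) (v : ℝ≥0) (hv : (0:ℝ) < v) (d : ℝ) (hd : 0 ≤ d)
    {x : ℝ} (hx : x ≤ m - d) :
    gaussianPDFReal m v x ≤ Real.exp (-d ^ 2 / (2 * v)) * gaussianPDFReal (m - d) v x := by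
  rw [gaussianPDFReal, gaussianPDFReal, mul_left_comm]
  have h0 : (0:ℝ) ≤ (Real.sqrt (2 * Real.pi * v))⁻¹ := by positivity
  refine mul_le_mul_of_nonneg_left ?_ h0
  rw [← Real.exp_add]
  refine Real.exp_le_exp.mpr ?_
  rw [← add_div, div_le_div_iff₀ (by positivity : (0:ℝ) < 2 * v) (by positivity : (0:ℝ) < 2 * v)]
  nlinarith [mul_nonneg (mul_nonneg hd (by linarith : (0:ℝ) ≤ m - d - x)) hv.le]

lemma gauss_tail_left (m : ℝ) (v : ℝ≥0) (hv : v ≠ 0) (d : ℝ) (hd : 0 ≤ d) :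
    gaussianReal m v {x : ℝ | x ≤ m - d} ≤ ENNReal.ofReal (Real.exp (-d ^ 2 / (2 * v))) := by
  have hv' : (0:ℝ) < v := NNReal.coe_pos.mpr hv.bot_lt
  rw [gaussianReal_apply _ hv]
  have hle : ∫⁻ x in {x : ℝ | x ≤ m - d}, gaussianPDF m v x
      ≤ ∫⁻ x in {x : ℝ | x ≤ m - d},
        ENNReal.ofReal (Real.exp (-d ^ 2 / (2 * v))) * gaussianPDF (m - d) v x := by
    refine setLIntegral_mono ((measurable_const.mul (measurable_gaussianPDFReal _ _).ennreal_ofReal)) ?_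
    intro x hx
    rw [gaussianPDF, gaussianPDF, ← ENNReal.ofReal_mul (Real.exp_pos _).le]
    exact ENNReal.ofReal_le_ofReal (gaussianPDFReal_shift_le m v hv' d hd hx)
  refine hle.trans ?_
  rw [lintegral_const_mul' _ _ ENNReal.ofReal_ne_top]
  have h1 : ∫⁻ x in {x : ℝ | x ≤ m - d}, gaussianPDF (m - d) v x
      = gaussianReal (m - d) v {x : ℝ | x ≤ m - d} := (gaussianReal_apply _ hv _).symm
  rw [h1]
  calc ENNReal.ofReal (Real.exp (-d ^ 2 / (2 * v))) * gaussianReal (m - d) v {x : ℝ | x ≤ m - d}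
      ≤ ENNReal.ofReal (Real.exp (-d ^ 2 / (2 * v))) * 1 := by
        gcongr
        exact prob_le_one
    _ = _ := mul_one _

lemma gaussianPDFReal_shift_le' (m : ℝ) (v : ℝ≥0) (hv : (0:ℝ) < v) (d : ℝ) (hd : 0 ≤ d)
    {x : ℝ} (hx : m + d ≤ x) :
    gaussianPDFReal m v x ≤ Real.exp (-d ^ 2 / (2 * v)) * gaussianPDFReal (m + d) v x := by
  rw [gaussianPDFReal, gaussianPDFReal, mul_left_comm]
  have h0 : (0:ℝ) ≤ (Real.sqrt (2 * Real.pi * v))⁻¹ := by positivity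
  refine mul_le_mul_of_nonneg_left ?_ h0
  rw [← Real.exp_add]
  refine Real.exp_le_exp.mpr ?_
  rw [← add_div, div_le_div_iff₀ (by positivity : (0:ℝ) < 2 * v) (by positivity : (0:ℝ) < 2 * v)]
  nlinarith [mul_nonneg (mul_nonneg hd (by linarith : (0:ℝ) ≤ x - m - d)) hv.le]

lemma gauss_tail_right (m : ℝ) (v : ℝ≥0) (hv : v ≠ 0) (d : ℝ) (hd : 0 ≤ d) :
    gaussianReal m v {x : ℝ | m + d ≤ x} ≤ ENNReal.ofReal (Real.exp (-d ^ 2 / (2 * v))) := by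
  have hv' : (0:ℝ) < v := NNReal.coe_pos.mpr hv.bot_lt
  rw [gaussianReal_apply _ hv]
  have hle : ∫⁻ x in {x : ℝ | m + d ≤ x}, gaussianPDF m v x
      ≤ ∫⁻ x in {x : ℝ | m + d ≤ x},
        ENNReal.ofReal (Real.exp (-d ^ 2 / (2 * v))) * gaussianPDF (m + d) v x := by
    refine setLIntegral_mono ((measurable_const.mul (measurable_gaussianPDFReal _ _).ennreal_ofReal)) ?_
    intro x hx
    rw [gaussianPDF, gaussianPDF, ← ENNReal.ofReal_mul (Real.exp_pos _).le]
    exact ENNReal.ofReal_le_ofReal (gaussianPDFReal_shift_le' m v hv' d hd hx)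
  refine hle.trans ?_
  rw [lintegral_const_mul' _ _ ENNReal.ofReal_ne_top]
  have h1 : ∫⁻ x in {x : ℝ | m + d ≤ x}, gaussianPDF (m + d) v x
      = gaussianReal (m + d) v {x : ℝ | m + d ≤ x} := (gaussianReal_apply _ hv _).symm
  rw [h1]
  calc ENNReal.ofReal (Real.exp (-d ^ 2 / (2 * v))) * gaussianReal (m + d) v {x : ℝ | m + d ≤ x}
      ≤ ENNReal.ofReal (Real.exp (-d ^ 2 / (2 * v))) * 1 := by
        gcongr
        exact prob_le_one
    _ = _ := mul_one _

/-- If `σ^t ≤ τ`, `C ≥ 1`, `|θ|^t ≥ C^t τ` and `X ~ N(θ, σ²)`, then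
`P(|X|^t ≤ τ) ≤ exp(-(C-1)²/2)`. -/
theorem gaussian_small_ball (t σ τ C θ : ℝ) (ht : 1 ≤ t) (hσ : 0 < σ) (hτ : 0 < τ)
    (hστ : σ ^ t ≤ τ) (hC : 1 ≤ C) (hθ : C ^ t * τ ≤ |θ| ^ t) :
    gaussianReal θ (σ ^ 2).toNNReal {x : ℝ | |x| ^ t ≤ τ}
      ≤ ENNReal.ofReal (Real.exp (-(C - 1) ^ 2 / 2)) := by
  have ht0 : 0 < t := lt_of_lt_of_le one_pos ht
  set s : ℝ := τ ^ (1 / t) with hs_def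
  have hs0 : 0 < s := Real.rpow_pos_of_pos hτ _
  have hst : s ^ t = τ := by
    rw [hs_def, ← Real.rpow_mul hτ.le, one_div_mul_cancel ht0.ne', Real.rpow_one]
  have hσs : σ ≤ s := by
    by_contra h
    push_neg at h
    exact absurd (hστ.trans_eq hst.symm) (not_le.mpr (Real.rpow_lt_rpow hs0.le h ht0))
  have hθs : C * s ≤ |θ| := by
    by_contra h
    push_neg at h
    have h2 : |θ| ^ t < (C * s) ^ t := Real.rpow_lt_rpow (abs_nonneg θ) h ht0
    rw [Real.mul_rpow (by linarith : (0:ℝ) ≤ C) hs0.le, hst] at h2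
    exact absurd hθ (not_le.mpr h2)
  have hsub : ∀ x ∈ {x : ℝ | |x| ^ t ≤ τ}, |x| ≤ s := by
    intro x hx
    by_contra h
    push_neg at h
    have h2 : s ^ t < |x| ^ t := Real.rpow_lt_rpow hs0.le h ht0
    rw [hst] at h2
    exact absurd hx (not_le.mpr h2)
  set v : NNReal := (σ ^ 2).toNNReal with hv_def
  have hv : v ≠ 0 := by
    simp only [hv_def, ne_eq, Real.toNNReal_eq_zero, not_le]
    positivity
  have hvc : (v : ℝ) = σ ^ 2 := Real.coe_toNNReal _ (sq_nonneg σ)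
  have hd0 : 0 ≤ (C - 1) * σ := mul_nonneg (by linarith) hσ.le
  have hexp : -((C - 1) * σ) ^ 2 / (2 * (v : ℝ)) = -(C - 1) ^ 2 / 2 := by
    rw [hvc]; field_simp
  rcases lt_trichotomy θ 0 with hθ0 | hθ0 | hθ0
  · have habs : |θ| = -θ := abs_of_neg hθ0
    have hsub2 : {x : ℝ | |x| ^ t ≤ τ} ⊆ {x : ℝ | θ + (C - 1) * σ ≤ x} := by
      intro x hx
      have h1 : |x| ≤ s := hsub x hx
      have h2 : -s ≤ x := neg_le_of_abs_le h1
      have h3 : C * s ≤ -θ := habs ▸ hθs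
      have h4 : (C - 1) * σ ≤ (C - 1) * s := mul_le_mul_of_nonneg_left hσs (by linarith)
      simp only [Set.mem_setOf_eq]
      nlinarith
    calc gaussianReal θ v {x : ℝ | |x| ^ t ≤ τ}
        ≤ gaussianReal θ v {x : ℝ | θ + (C - 1) * σ ≤ x} := measure_mono hsub2
      _ ≤ ENNReal.ofReal (Real.exp (-((C - 1) * σ) ^ 2 / (2 * (v : ℝ)))) :=
          gauss_tail_right θ v hv _ hd0
      _ = _ := by rw [hexp]
  · exfalso
    have : (0:ℝ) < C * s := mul_pos (by linarith) hs0
    rw [hθ0] at hθs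
    simp at hθs
    linarith
  · have habs : |θ| = θ := abs_of_pos hθ0
    have hsub2 : {x : ℝ | |x| ^ t ≤ τ} ⊆ {x : ℝ | x ≤ θ - (C - 1) * σ} := by
      intro x hx
      have h1 : |x| ≤ s := hsub x hx
      have h2 : x ≤ s := le_of_abs_le h1
      have h3 : C * s ≤ θ := habs ▸ hθs
      have h4 : (C - 1) * σ ≤ (C - 1) * s := mul_le_mul_of_nonneg_left hσs (by linarith)
      simp only [Set.mem_setOf_eq]
      nlinarith
    calc gaussianReal θ v {x : ℝ | |x| ^ t ≤ τ}
        ≤ gaussianReal θ v {x : ℝ | x ≤ θ - (C - 1) * σ} := measure_mono hsub2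
      _ ≤ ENNReal.ofReal (Real.exp (-((C - 1) * σ) ^ 2 / (2 * (v : ℝ)))) :=
          gauss_tail_left θ v hv _ hd0
      _ = _ := by rw [hexp]
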